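/- Fix ρ > 0 and let Ω = {Z : |||Z||| ≤ ρ} be the ball of an arbitrary matrix norm |||·||| on 𝕏, with dual norm |||·|||_*. Let X̄ ∈ Ω with rank(X̄) ≤ r. If H ∈ N_{Λ_r}(X̄) satisfies ⟨H, X̄⟩ = 0 and −H ∈ N_Ω(X̄) (i.e. ⟨H, Z − X̄⟩ ≥ 0 for all Z ∈ Ω), then H = 0. Consequently, [−N_Ω(X̄)] ∩ N_{Λ_r}(X̄) = {0}. -/

import Mathlib

attribute [local instance] Matrix.frobeniusNormedAddCommGroup
attribute [local instance] Matrix.frobeniusNormedSpace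

/-- The trace (Frobenius) inner product of two real matrices. -/
def minner {n m : ℕ} (A B : Matrix (Fin n) (Fin m) ℝ) : ℝ :=
  ∑ i, ∑ j, A i j * B i j

/-- The Fréchet (regular) normal cone to `S` at `x`. -/
def frechetNormalCone {n m : ℕ} (S : Set (Matrix (Fin n) (Fin m) ℝ))
    (x : Matrix (Fin n) (Fin m) ℝ) : Set (Matrix (Fin n) (Fin m) ℝ) :=
  {v | ∀ ε > (0:ℝ), ∃ δ > (0:ℝ), ∀ y ∈ S, dist y x < δ →
    minner v (y - x) ≤ ε * dist y x}

/-- The limiting (Mordukhovich) normal cone to `S` at `x`. -/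
def limitingNormalCone {n m : ℕ} (S : Set (Matrix (Fin n) (Fin m) ℝ))
    (x : Matrix (Fin n) (Fin m) ℝ) : Set (Matrix (Fin n) (Fin m) ℝ) :=
  {v | ∃ xs vs : ℕ → Matrix (Fin n) (Fin m) ℝ,
    (∀ k, xs k ∈ S) ∧ Filter.Tendsto xs Filter.atTop (nhds x) ∧
    Filter.Tendsto vs Filter.atTop (nhds v) ∧
    ∀ k, vs k ∈ frechetNormalCone S (xs k)}

lemma minner_smul_right {n m : ℕ} (A B : Matrix (Fin n) (Fin m) ℝ) (t : ℝ) :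
    minner A (t • B) = t * minner A B := by
  simp only [minner, Matrix.smul_apply, smul_eq_mul, Finset.mul_sum]
  congr 1; ext i; congr 1; ext j; ring

lemma minner_sub_right {n m : ℕ} (A B C : Matrix (Fin n) (Fin m) ℝ) :
    minner A (B - C) = minner A B - minner A C := by
  simp only [minner, Matrix.sub_apply, mul_sub, Finset.sum_sub_distrib]

lemma rank_smul_le {n m r : ℕ} (c : ℝ) (A : Matrix (Fin n) (Fin m) ℝ) (h : A.rank ≤ r) :
    (c • A).rank ≤ r := by
  have hrw : c • A = (c • (1 : Matrix (Fin n) (Fin n) ℝ)) * A := by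
    rw [Matrix.smul_mul, Matrix.one_mul]
  rw [hrw]
  exact le_trans (Matrix.rank_mul_le_right _ _) h

lemma frechet_perp {n m r : ℕ} (x v : Matrix (Fin n) (Fin m) ℝ) (hx : x.rank ≤ r)
    (hv : v ∈ frechetNormalCone {Z : Matrix (Fin n) (Fin m) ℝ | Z.rank ≤ r} x) :
    minner v x = 0 := by
  have key : ∀ ε > (0:ℝ), |minner v x| ≤ ε * ‖x‖ := by
    intro ε hε
    obtain ⟨δ, hδ, hcone⟩ := hv ε hε
    set t : ℝ := δ / (2 * (‖x‖ + 1)) with ht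
    have hxn : (0:ℝ) ≤ ‖x‖ := norm_nonneg x
    have htpos : 0 < t := by positivity
    have hdist : ∀ s : ℝ, dist ((1 + s) • x) x = |s| * ‖x‖ := by
      intro s
      have hsub : (1 + s) • x - x = s • x := by
        rw [add_smul, one_smul]; abel
      rw [dist_eq_norm, hsub, norm_smul, Real.norm_eq_abs]
    have htx : t * ‖x‖ < δ := by
      have h1 : t * ‖x‖ ≤ t * (‖x‖ + 1) := by nlinarith
      have h2 : t * (‖x‖ + 1) = δ / 2 := by
        field_simp [ht]
        have h3 : t * (2 * (‖x‖ + 1)) = δ := by rw [ht]; exact div_mul_cancel₀ _ (by positivity)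
        linarith
      nlinarith
    have hrank : ∀ s : ℝ, ((1 + s) • x).rank ≤ r := fun s => rank_smul_le _ _ hx
    have h1 := hcone ((1 + t) • x) (hrank t) (by rw [hdist]; rwa [abs_of_pos htpos])
    have h2 := hcone ((1 + (-t)) • x) (hrank (-t))
      (by rw [hdist]; rwa [abs_neg, abs_of_pos htpos])
    have e1 : (1 + t) • x - x = t • x := by rw [add_smul, one_smul]; abel
    have e2 : (1 + (-t)) • x - x = (-t) • x := by rw [add_smul, one_smul]; abel
    rw [hdist t, abs_of_pos htpos] at h1
    rw [hdist (-t), abs_neg, abs_of_pos htpos] at h2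
    rw [e1, minner_smul_right] at h1
    rw [e2, minner_smul_right] at h2
    have hb1 : minner v x ≤ ε * ‖x‖ := by
      have hm : t * minner v x ≤ t * (ε * ‖x‖) := by nlinarith [h1]
      exact le_of_mul_le_mul_left hm htpos
    have hb2 : -(ε * ‖x‖) ≤ minner v x := by
      have hm : t * (-(minner v x)) ≤ t * (ε * ‖x‖) := by nlinarith [h2]
      have := le_of_mul_le_mul_left hm htpos
      linarith
    rw [abs_le]; exact ⟨hb2, hb1⟩
  by_contra h
  have habs : 0 < |minner v x| := abs_pos.mpr h
  have hk := key (|minner v x| / (2 * (‖x‖ + 1))) (by positivity)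
  rw [div_mul_eq_mul_div, le_div_iff₀ (by positivity : (0:ℝ) < 2 * (‖x‖ + 1))] at hk
  nlinarith [norm_nonneg x]

set_option maxHeartbeats 1000000 in
lemma limiting_perp {n m r : ℕ} (x v : Matrix (Fin n) (Fin m) ℝ)
    (hv : v ∈ limitingNormalCone {Z : Matrix (Fin n) (Fin m) ℝ | Z.rank ≤ r} x) :
    minner v x = 0 := by
  obtain ⟨xs, vs, hxs, hxlim, hvlim, hcone⟩ := hv
  have hzero : ∀ k, minner (vs k) (xs k) = 0 := fun k =>
    frechet_perp (xs k) (vs k) (hxs k) (hcone k)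
  have hvE : ∀ i j, Filter.Tendsto (fun k => vs k i j) Filter.atTop (nhds (v i j)) :=
    fun i j => ((show Continuous fun A : Matrix (Fin n) (Fin m) ℝ => A i j from
      (continuous_apply j).comp (continuous_apply i)).tendsto v).comp hvlim
  have hxE : ∀ i j, Filter.Tendsto (fun k => xs k i j) Filter.atTop (nhds (x i j)) :=
    fun i j => ((show Continuous fun A : Matrix (Fin n) (Fin m) ℝ => A i j from
      (continuous_apply j).comp (continuous_apply i)).tendsto x).comp hxlim
  have hlim : Filter.Tendsto (fun k => minner (vs k) (xs k)) Filter.atTop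
      (nhds (minner v x)) := by
    unfold minner
    exact tendsto_finset_sum _ (fun i _ => tendsto_finset_sum _
      (fun j _ => (hvE i j).mul (hxE i j)))
  have hlim0 : Filter.Tendsto (fun k => minner (vs k) (xs k)) Filter.atTop (nhds 0) := by
    simp only [hzero]; exact tendsto_const_nhds
  exact tendsto_nhds_unique hlim hlim0

/-- let `Ω = {Z : ν Z ≤ ρ}` be the ball of an arbitrary matrix norm `ν`
and `X̄ ∈ Ω` with `rank X̄ ≤ r`. If `H ∈ N_{Λ_r}(X̄)` satisfies `⟨H, X̄⟩ = 0` and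
`−H ∈ N_Ω(X̄)` (i.e. `⟨H, Z − X̄⟩ ≥ 0` for all `Z ∈ Ω`), then `H = 0`. Consequently
`[−N_Ω(X̄)] ∩ N_{Λ_r}(X̄) = {0}`. -/
theorem stmt10 (n m r : ℕ) (ρ : ℝ) (hρ : 0 < ρ)
    (ν : Matrix (Fin n) (Fin m) ℝ → ℝ)
    (hν0 : ∀ Z, ν Z = 0 ↔ Z = 0)
    (hνsmul : ∀ (c : ℝ) Z, ν (c • Z) = |c| * ν Z)
    (hνadd : ∀ Z W, ν (Z + W) ≤ ν Z + ν W)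
    (Xbar : Matrix (Fin n) (Fin m) ℝ) (hXΩ : ν Xbar ≤ ρ) (hXr : Xbar.rank ≤ r) :
    (∀ H : Matrix (Fin n) (Fin m) ℝ,
      H ∈ limitingNormalCone {Z : Matrix (Fin n) (Fin m) ℝ | Z.rank ≤ r} Xbar →
      minner H Xbar = 0 →
      (∀ Z, ν Z ≤ ρ → 0 ≤ minner H (Z - Xbar)) → H = 0) ∧
    {H : Matrix (Fin n) (Fin m) ℝ | ∀ Z, ν Z ≤ ρ → minner (-H) (Z - Xbar) ≤ 0} ∩
        limitingNormalCone {Z : Matrix (Fin n) (Fin m) ℝ | Z.rank ≤ r} Xbar = {0} := by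
  have hνnonneg : ∀ Z, 0 ≤ ν Z := by
    intro Z
    have h1 := hνadd Z (-Z)
    have h2 : ν (-Z) = ν Z := by
      have := hνsmul (-1) Z
      simpa using this
    have h3 : ν (Z + -Z) = 0 := by
      rw [add_neg_cancel]; exact (hν0 0).mpr rfl
    rw [h3, h2] at h1
    linarith
  have key : ∀ H : Matrix (Fin n) (Fin m) ℝ,
      minner H Xbar = 0 →
      (∀ Z, ν Z ≤ ρ → 0 ≤ minner H (Z - Xbar)) → H = 0 := by
    intro H hperp hball
    set c : ℝ := ρ / (ν H + 1) with hc
    have hH0 : (0:ℝ) ≤ ν H := hνnonneg H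
    have hcpos : 0 < c := by positivity
    have hZball : ν (-(c • H)) ≤ ρ := by
      have hrw : -(c • H) = (-c) • H := by rw [neg_smul]
      rw [hrw, hνsmul, abs_neg, abs_of_pos hcpos, hc, div_mul_eq_mul_div,
        div_le_iff₀ (by positivity)]
      nlinarith
    have hb := hball (-(c • H)) hZball
    rw [minner_sub_right, hperp, sub_zero] at hb
    have hneg : minner H (-(c • H)) = -(c * minner H H) := by
      have hrw : -(c • H) = (-c) • H := by rw [neg_smul]
      rw [hrw, minner_smul_right]; ring
    rw [hneg] at hb
    have hsum : minner H H = ∑ i, ∑ j, (H i j)^2 := by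
      simp [minner, sq]
    have hHH0 : minner H H = 0 := by
      have hge : 0 ≤ minner H H := by rw [hsum]; positivity
      nlinarith
    ext i j
    rw [hsum] at hHH0
    have h1 := (Finset.sum_eq_zero_iff_of_nonneg
      (fun i _ => Finset.sum_nonneg (fun j _ => sq_nonneg (H i j)))).mp hHH0 i (by simp)
    have h2 := (Finset.sum_eq_zero_iff_of_nonneg
      (fun j _ => sq_nonneg (H i j))).mp h1 j (by simp)
    have := sq_eq_zero_iff.mp h2
    simpa using this
  constructor
  · intro H _ hperp hball
    exact key H hperp hball
  · ext H
    simp only [Set.mem_inter_iff, Set.mem_setOf_eq, Set.mem_singleton_iff]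
    constructor
    · rintro ⟨hball, hcone⟩
      have hperp := limiting_perp Xbar H hcone
      apply key H hperp
      intro Z hZ
      have hb := hball Z hZ
      have hneg : minner (-H) (Z - Xbar) = -(minner H (Z - Xbar)) := by
        simp [minner, Finset.sum_neg_distrib]
      rw [hneg] at hb
      linarith
    · rintro rfl
      refine ⟨fun Z hZ => by simp [minner], ?_⟩
      refine ⟨fun _ => Xbar, fun _ => 0, fun _ => hXr, tendsto_const_nhds,
        tendsto_const_nhds, fun k => ?_⟩
      intro ε hε
      refine ⟨1, one_pos, fun y hy hd => ?_⟩
      have hz : minner 0 (y - Xbar) = 0 := by simp [minner]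
      rw [hz]
      positivity
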